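/- Define the operator θ on diagonal elementary Hochschild p-chains over the algebra of Hilbert-Schmidt operators by θ = Id − (bS + Sb), where S inserts the fixed idempotent factor (e_{α₀}^{i₀} × ē_{α₀}^I) ⊗ (e_{α₀}^I × ⋯) at the front. Then on an elementary diagonal chain K = (e_{α₀}^{i₀}×ē_{α₁}^{i₁}) ⊗ ⋯ ⊗ (e_{α_p}^{i_p}×ē_{α₀}^{i₀}), one has θK = (-1)^p [(e_{α_p}^{i_p}×ē_{α₀}^I)⊗(e_{α₀}^I×ē_{α₁}^{i₁}) − (e_{α_p}^{i_p}×ē_{α_p}^I)⊗(e_{α_p}^I×ē_{α₁}^{i₁})] ⊗ (e_{α₁}^{i₁}×ē_{α₂}^{i₂}) ⊗ ⋯ ⊗ (e_{α_{p-1}}^{i_{p-1}}×ē_{α_p}^{i_p}). -/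

import Mathlib

noncomputable section

open Finsupp

/-- An elementary Hilbert-Schmidt kernel symbol `e_α^i × ē_β^j` is encoded as the
pair `((α,i),(β,j))`; `A` indexes the simplices and `N` the basis elements. -/
abbrev Elem (A N : Type*) := (A × N) × (A × N)

variable {A N : Type*} [DecidableEq A] [DecidableEq N]

/-- Composition of elementary kernels:
`(e_α^i × ē_β^j)∘(e_γ^k × ē_η^l) = δ^{jk} δ_{βγ} (e_α^i × ē_η^l)`
(`none` encodes the result `0`). -/
def mergeOpt (a b : Elem A N) : Option (Elem A N) :=
  if a.2 = b.1 then some (a.1, b.2) else none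

/-- The `k`-th Hochschild face of an elementary `p`-chain (a tuple of `p+1`
elementary kernels), as an element of the free `ℂ`-vector space on tuples:
for `k < p` it composes factors `k` and `k+1`; for `k = p` it cyclically
composes the last and first factors. -/
def hsFaceTup (p : ℕ) (k : Fin (p + 1)) (e : Fin (p + 1) → Elem A N) :
    (Fin p → Elem A N) →₀ ℂ :=
  if h : (k : ℕ) < p then
    match mergeOpt (e k) (e ⟨(k : ℕ) + 1, by omega⟩) with
    | none => 0
    | Option.some m =>
        Finsupp.single
          (fun j : Fin p =>
            if (j : ℕ) < (k : ℕ) then e j.castSucc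
            else if (j : ℕ) = (k : ℕ) then m
            else e j.succ) 1
  else
    match mergeOpt (e (Fin.last p)) (e ⟨0, Nat.succ_pos p⟩) with
    | none => 0
    | Option.some m =>
        Finsupp.single
          (fun j : Fin p =>
            if (j : ℕ) = 0 then m else e j.castSucc) 1

/-- The Hochschild boundary `b = Σ_k (−1)^k ∂_k` on the free `ℂ`-vector space
spanned by elementary Hochschild chains of Hilbert-Schmidt kernels. -/
def hsB (p : ℕ) (c : (Fin (p + 1) → Elem A N) →₀ ℂ) : (Fin p → Elem A N) →₀ ℂ :=
  c.sum fun e coef => ∑ k : Fin (p + 1), ((-1 : ℂ) ^ (k : ℕ) * coef) • hsFaceTup p k e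

/-- The operator `S`, inserting the fixed factor
`(e_{α₀}^{i₀} × ē_{α₀}^I) ⊗ (e_{α₀}^I × ⋯)` at the front: it replaces the first
factor `e_{α₀}^{i₀} × ē_{α₁}^{i₁}` by
`(e_{α₀}^{i₀} × ē_{α₀}^I) ⊗ (e_{α₀}^I × ē_{α₁}^{i₁})`.  Here `I : A → N` fixes a
basis element `e_α^{I_α}` for each simplex `α`. -/
def hsS (I : A → N) (p : ℕ) (c : (Fin (p + 1) → Elem A N) →₀ ℂ) :
    (Fin (p + 2) → Elem A N) →₀ ℂ :=
  c.sum fun e coef =>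
    Finsupp.single
      (fun j : Fin (p + 2) =>
        if (j : ℕ) = 0 then ((e 0).1, ((e 0).1.1, I (e 0).1.1))
        else if (j : ℕ) = 1 then (((e 0).1.1, I (e 0).1.1), (e 0).2)
        else e ⟨(j : ℕ) - 1, by have := j.isLt; omega⟩) coef


set_option maxHeartbeats 1600000
section Aux
variable {A N : Type*} [DecidableEq A] [DecidableEq N]

lemma mergeOpt_some (a b : Elem A N) (h : a.2 = b.1) : mergeOpt a b = some (a.1, b.2) := by
  simp [mergeOpt, h]

lemma hsFaceTup_of_lt {p : ℕ} {k : Fin (p + 1)} (h : (k : ℕ) < p)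
    (e : Fin (p + 1) → Elem A N) (m : Elem A N)
    (hm : mergeOpt (e k) (e ⟨(k : ℕ) + 1, by omega⟩) = some m) :
    hsFaceTup p k e =
      Finsupp.single (fun j : Fin p =>
        if (j : ℕ) < (k : ℕ) then e j.castSucc
        else if (j : ℕ) = (k : ℕ) then m
        else e j.succ) 1 := by
  rw [hsFaceTup, dif_pos h, hm]

lemma hsFaceTup_last {p : ℕ} (e : Fin (p + 1) → Elem A N) (m : Elem A N)
    (hm : mergeOpt (e (Fin.last p)) (e ⟨0, Nat.succ_pos p⟩) = some m) :
    hsFaceTup p (Fin.last p) e =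
      Finsupp.single (fun j : Fin p =>
        if (j : ℕ) = 0 then m else e j.castSucc) 1 := by
  rw [hsFaceTup, dif_neg (by simp), hm]

def sFun (I : A → N) (p : ℕ) (e : Fin (p + 1) → Elem A N) : Fin (p + 2) → Elem A N :=
  fun j : Fin (p + 2) =>
    if (j : ℕ) = 0 then ((e 0).1, ((e 0).1.1, I (e 0).1.1))
    else if (j : ℕ) = 1 then (((e 0).1.1, I (e 0).1.1), (e 0).2)
    else e ⟨(j : ℕ) - 1, by have := j.isLt; omega⟩

lemma hsS_eq (I : A → N) (p : ℕ) (c : (Fin (p + 1) → Elem A N) →₀ ℂ) :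
    hsS I p c = Finsupp.mapDomain (sFun I p) c := rfl

lemma hsS_single (I : A → N) (p : ℕ) (e : Fin (p + 1) → Elem A N) (c : ℂ) :
    hsS I p (Finsupp.single e c) = Finsupp.single (sFun I p e) c := by
  rw [hsS_eq, Finsupp.mapDomain_single]

lemma hsB_single {p : ℕ} (e : Fin (p + 1) → Elem A N) (c : ℂ) :
    hsB p (Finsupp.single e c)
      = ∑ k : Fin (p + 1), ((-1 : ℂ) ^ (k : ℕ) * c) • hsFaceTup p k e := by
  rw [hsB, Finsupp.sum_single_index]
  simp

lemma hsS_sum_smul (I : A → N) (p : ℕ) {ι : Type*} (s : Finset ι) (c : ι → ℂ)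
    (f : ι → ((Fin (p + 1) → Elem A N) →₀ ℂ)) :
    hsS I p (∑ k ∈ s, c k • f k) = ∑ k ∈ s, c k • hsS I p (f k) := by
  simp only [hsS_eq, ← Finsupp.lmapDomain_apply ℂ ℂ, map_sum, map_smul]

end Aux
section Aux2
set_option linter.unusedSectionVars false
variable {A N : Type*} [DecidableEq A] [DecidableEq N]

def dChain (p : ℕ) (α : Fin (p + 2) → A) (i : Fin (p + 2) → N) : Fin (p + 2) → Elem A N :=
  fun k => ((α k, i k), (α (k + 1), i (k + 1)))

lemma dChain_nat (p : ℕ) (α : Fin (p + 2) → A) (i : Fin (p + 2) → N)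
    (v : ℕ) (h : v < p + 1) :
    dChain p α i ⟨v, by omega⟩ =
      ((α ⟨v, by omega⟩, i ⟨v, by omega⟩), (α ⟨v + 1, by omega⟩, i ⟨v + 1, by omega⟩)) := by
  have h1 : (⟨v, by omega⟩ : Fin (p + 2)) + 1 = ⟨v + 1, by omega⟩ := by
    apply Fin.ext
    rw [Fin.val_add_one_of_lt]
    · simp [Fin.lt_def]; omega
  rw [dChain, h1]

lemma dChain_last (p : ℕ) (α : Fin (p + 2) → A) (i : Fin (p + 2) → N) :
    dChain p α i (Fin.last (p + 1)) =
      ((α (Fin.last (p + 1)), i (Fin.last (p + 1))), (α 0, i 0)) := by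
  rw [dChain, Fin.last_add_one]

lemma sFun_zero (I : A → N) (p : ℕ) (e : Fin (p + 1) → Elem A N) (j : Fin (p + 2))
    (h : (j : ℕ) = 0) :
    sFun I p e j = ((e 0).1, ((e 0).1.1, I (e 0).1.1)) := by
  simp only [sFun]; rw [if_pos h]

lemma sFun_one (I : A → N) (p : ℕ) (e : Fin (p + 1) → Elem A N) (j : Fin (p + 2))
    (h : (j : ℕ) = 1) :
    sFun I p e j = (((e 0).1.1, I (e 0).1.1), (e 0).2) := by
  simp only [sFun]; rw [if_neg (by omega), if_pos h]

lemma sFun_ge (I : A → N) (p : ℕ) (e : Fin (p + 1) → Elem A N) (j : Fin (p + 2))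
    (h : 2 ≤ (j : ℕ)) :
    sFun I p e j = e ⟨(j : ℕ) - 1, by have := j.isLt; omega⟩ := by
  simp only [sFun]; rw [if_neg (by omega), if_neg (by omega)]

end Aux2
section Aux3
set_option linter.unusedSectionVars false
set_option maxHeartbeats 1600000
variable {A N : Type*} [DecidableEq A] [DecidableEq N]

lemma finvm {n a : ℕ} (h : a < n) : ((⟨a, h⟩ : Fin n) : ℕ) = a := rfl

lemma dChain_consec (p : ℕ) (α : Fin (p + 2) → A) (i : Fin (p + 2) → N)
    (k : Fin (p + 2)) (hk : (k : ℕ) < p + 1) :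
    (dChain p α i k).2 = (dChain p α i ⟨(k : ℕ) + 1, by omega⟩).1 := by
  have h1 := dChain_nat p α i (k : ℕ) hk
  rw [Fin.eta] at h1
  rw [h1]; rfl

lemma cancel (I : A → N) (p : ℕ) (α : Fin (p + 2) → A) (i : Fin (p + 2) → N)
    (k : Fin (p + 2)) (hk : (k : ℕ) < p + 1) :
    hsFaceTup (p + 2) ⟨(k : ℕ) + 1, by omega⟩ (sFun I (p + 1) (dChain p α i))
      = hsS I p (hsFaceTup (p + 1) k (dChain p α i)) := by
  have hmR : mergeOpt (dChain p α i k) (dChain p α i ⟨(k : ℕ) + 1, by omega⟩)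
      = some ((dChain p α i k).1, (dChain p α i ⟨(k : ℕ) + 1, by omega⟩).2) :=
    mergeOpt_some _ _ (dChain_consec p α i k hk)
  rw [hsFaceTup_of_lt hk _ _ hmR, hsS_single]
  by_cases hk0 : (k : ℕ) = 0
  · -- k = 0
    have hmL : mergeOpt (sFun I (p + 1) (dChain p α i) ⟨(k : ℕ) + 1, by omega⟩)
        (sFun I (p + 1) (dChain p α i) ⟨(k : ℕ) + 1 + 1, by omega⟩)
        = some ((((dChain p α i 0).1.1, I (dChain p α i 0).1.1),
            (dChain p α i ⟨(k : ℕ) + 1, by omega⟩).2)) := by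
      have e1 : sFun I (p + 1) (dChain p α i) ⟨(k : ℕ) + 1, by omega⟩
          = (((dChain p α i 0).1.1, I (dChain p α i 0).1.1), (dChain p α i 0).2) := by
        simp only [sFun, finvm]
        rw [if_neg (by omega), if_pos (by omega)]
      have e2 : sFun I (p + 1) (dChain p α i) ⟨(k : ℕ) + 1 + 1, by omega⟩
          = dChain p α i ⟨(k : ℕ) + 1, by omega⟩ := by
        simp only [sFun, finvm]
        rw [if_neg (by omega), if_neg (by omega)]; rfl
      rw [e1, e2]
      apply mergeOpt_some
      have h1 := dChain_consec p α i k hk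
      have hk' : k = 0 := Fin.ext (by rw [Fin.val_zero]; exact hk0)
      rw [← hk']
      exact h1
    rw [hsFaceTup_of_lt (by simp only [finvm]; omega) _ _ hmL]
    refine congrArg (fun t => Finsupp.single t 1) (funext fun j => ?_)
    obtain ⟨v, hv⟩ := j
    have hk' : k = 0 := Fin.ext (by rw [Fin.val_zero]; exact hk0)
    subst hk'
    simp only [sFun, finvm, Fin.castSucc_mk, Fin.succ_mk, Fin.val_zero, Fin.castSucc_zero,
      Fin.coe_castSucc, Fin.val_succ]
    split_ifs <;>
      first
        | rfl
        | contradiction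
        | omega
        | exact congrArg (dChain p α i) (Fin.ext (by simp only [finvm]; omega))
        | grind
  · -- k ≥ 1
    have hmL : mergeOpt (sFun I (p + 1) (dChain p α i) ⟨(k : ℕ) + 1, by omega⟩)
        (sFun I (p + 1) (dChain p α i) ⟨(k : ℕ) + 1 + 1, by omega⟩)
        = some ((dChain p α i k).1, (dChain p α i ⟨(k : ℕ) + 1, by omega⟩).2) := by
      have e1 : sFun I (p + 1) (dChain p α i) ⟨(k : ℕ) + 1, by omega⟩
          = dChain p α i k := by
        simp only [sFun, finvm]
        rw [if_neg (by omega), if_neg (by omega)]; rfl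
      have e2 : sFun I (p + 1) (dChain p α i) ⟨(k : ℕ) + 1 + 1, by omega⟩
          = dChain p α i ⟨(k : ℕ) + 1, by omega⟩ := by
        simp only [sFun, finvm]
        rw [if_neg (by omega), if_neg (by omega)]; rfl
      rw [e1, e2]
      exact mergeOpt_some _ _ (dChain_consec p α i k hk)
    rw [hsFaceTup_of_lt (by simp only [finvm]; omega) _ _ hmL]
    refine congrArg (fun t => Finsupp.single t 1) (funext fun j => ?_)
    obtain ⟨v, hv⟩ := j
    simp only [sFun, finvm, Fin.castSucc_mk, Fin.succ_mk, Fin.val_zero, Fin.castSucc_zero,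
      Fin.coe_castSucc, Fin.val_succ]
    split_ifs <;>
      first
        | rfl
        | contradiction
        | omega
        | exact congrArg (dChain p α i) (Fin.ext (by simp only [finvm]; omega))
        | grind

end Aux3
section Aux4
set_option linter.unusedSectionVars false
set_option maxHeartbeats 1600000
variable {A N : Type*} [DecidableEq A] [DecidableEq N]

lemma finsub (p : ℕ) (v : ℕ) (hv : v < p + 2) (h2 : 1 ≤ v) :
    (⟨v, hv⟩ : Fin (p + 2)) - 1 = ⟨v - 1, by omega⟩ := by
  apply Fin.ext
  rw [Fin.coe_sub_one, if_neg (by simp [Fin.ext_iff]; omega)]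

lemma faceSe_zero (I : A → N) (p : ℕ) (α : Fin (p + 2) → A) (i : Fin (p + 2) → N) :
    hsFaceTup (p + 2) (0 : Fin (p + 3)) (sFun I (p + 1) (dChain p α i))
      = Finsupp.single (dChain p α i) 1 := by
  have hm : mergeOpt (sFun I (p + 1) (dChain p α i) (0 : Fin (p + 3)))
      (sFun I (p + 1) (dChain p α i) ⟨((0 : Fin (p + 3)) : ℕ) + 1, by exact Nat.succ_lt_succ (Nat.succ_pos _)⟩)
      = some ((dChain p α i 0).1, (dChain p α i 0).2) := by
    rw [sFun_zero _ _ _ _ rfl, sFun_one _ _ _ _ rfl]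
    exact mergeOpt_some _ _ rfl
  rw [hsFaceTup_of_lt (by exact Nat.succ_pos _) _ _ hm]
  refine congrArg (fun t => Finsupp.single t 1) (funext fun j => ?_)
  obtain ⟨v, hv⟩ := j
  simp only [sFun, finvm, Fin.castSucc_mk, Fin.succ_mk, Fin.val_zero, Fin.castSucc_zero,
    Fin.coe_castSucc, Fin.val_succ]
  split_ifs <;>
    first
      | rfl
      | contradiction
      | omega
      | exact congrArg (dChain p α i) (Fin.ext (by simp only [finvm, Fin.val_zero, Fin.val_last]; omega))

lemma faceSe_last (I : A → N) (p : ℕ) (α : Fin (p + 2) → A) (i : Fin (p + 2) → N) :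
    hsFaceTup (p + 2) (Fin.last (p + 2)) (sFun I (p + 1) (dChain p α i)) =
      Finsupp.single
        (fun j : Fin (p + 2) =>
          if (j : ℕ) = 0 then
            ((α (Fin.last (p + 1)), i (Fin.last (p + 1))), (α 0, I (α 0)))
          else if (j : ℕ) = 1 then ((α 0, I (α 0)), (α 1, i 1))
          else ((α (j - 1), i (j - 1)), (α j, i j))) (1 : ℂ) := by
  have hm : mergeOpt (sFun I (p + 1) (dChain p α i) (Fin.last (p + 2)))
      (sFun I (p + 1) (dChain p α i) ⟨0, Nat.succ_pos _⟩)
      = some ((α (Fin.last (p + 1)), i (Fin.last (p + 1))),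
          ((dChain p α i 0).1.1, I (dChain p α i 0).1.1)) := by
    rw [sFun_ge _ _ _ _ (by exact Nat.le_add_left 2 p), sFun_zero _ _ _ _ rfl]
    have := mergeOpt_some (dChain p α i (Fin.last (p + 1)))
      ((dChain p α i 0).1, ((dChain p α i 0).1.1, I (dChain p α i 0).1.1))
      (by rw [dChain_last]; rfl)
    exact this
  rw [hsFaceTup_last _ _ hm]
  refine congrArg (fun t => Finsupp.single t 1) (funext fun j => ?_)
  obtain ⟨v, hv⟩ := j
  rcases Nat.lt_or_ge v 2 with hv2 | hv2
  · interval_cases v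
    · rfl
    · rfl
  · -- v ≥ 2
    rw [finsub p v hv (by omega)]
    simp only [finvm, Fin.castSucc_mk]
    rw [if_neg (by omega), if_neg (by omega), if_neg (by omega)]
    rw [sFun_ge _ _ _ _ (by simp only [finvm]; omega)]
    simp only [finvm]
    rw [dChain_nat p α i (v - 1) (by omega)]
    have hv1 : v - 1 + 1 = v := by omega
    simp only [finvm, hv1]

lemma faceE_last (I : A → N) (p : ℕ) (α : Fin (p + 2) → A) (i : Fin (p + 2) → N) :
    hsS I p (hsFaceTup (p + 1) (Fin.last (p + 1)) (dChain p α i)) =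
      Finsupp.single
        (fun j : Fin (p + 2) =>
          if (j : ℕ) = 0 then
            ((α (Fin.last (p + 1)), i (Fin.last (p + 1))),
             (α (Fin.last (p + 1)), I (α (Fin.last (p + 1)))))
          else if (j : ℕ) = 1 then
            ((α (Fin.last (p + 1)), I (α (Fin.last (p + 1)))), (α 1, i 1))
          else ((α (j - 1), i (j - 1)), (α j, i j))) (1 : ℂ) := by
  have hm : mergeOpt (dChain p α i (Fin.last (p + 1))) (dChain p α i ⟨0, Nat.succ_pos _⟩)
      = some ((α (Fin.last (p + 1)), i (Fin.last (p + 1))), (dChain p α i 0).2) := by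
    have := mergeOpt_some (dChain p α i (Fin.last (p + 1))) (dChain p α i 0)
      (by rw [dChain_last]; rfl)
    exact this
  rw [hsFaceTup_last _ _ hm, hsS_single]
  refine congrArg (fun t => Finsupp.single t 1) (funext fun j => ?_)
  obtain ⟨v, hv⟩ := j
  rcases Nat.lt_or_ge v 2 with hv2 | hv2
  · interval_cases v
    · rfl
    · rfl
  · -- v ≥ 2
    rw [finsub p v hv (by omega)]
    rw [sFun_ge _ _ _ _ (by simp only [finvm]; omega)]
    simp only [finvm, Fin.castSucc_mk]
    rw [if_neg (by omega), if_neg (by omega), if_neg (by omega)]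
    try simp only [Fin.castSucc_mk, finvm]
    rw [dChain_nat p α i (v - 1) (by omega)]
    have hv1 : v - 1 + 1 = v := by omega
    simp only [finvm, hv1]

end Aux4

/-- **The operator `θ = Id − (bS + Sb)` on diagonal elementary chains.**
On an elementary diagonal chain
`K = (e_{α₀}^{i₀}×ē_{α₁}^{i₁}) ⊗ ⋯ ⊗ (e_{α_p}^{i_p}×ē_{α₀}^{i₀})` one has
`θK = (−1)^p [(e_{α_p}^{i_p}×ē_{α₀}^I)⊗(e_{α₀}^I×ē_{α₁}^{i₁})
            − (e_{α_p}^{i_p}×ē_{α_p}^I)⊗(e_{α_p}^I×ē_{α₁}^{i₁})]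
        ⊗ (e_{α₁}^{i₁}×ē_{α₂}^{i₂}) ⊗ ⋯ ⊗ (e_{α_{p-1}}^{i_{p-1}}×ē_{α_p}^{i_p})`
(stated here in degree `p+1` so that the term `Sb` is defined). -/
theorem theta_on_diagonal_chain (I : A → N) (p : ℕ)
    (α : Fin (p + 2) → A) (i : Fin (p + 2) → N)
    (K : (Fin (p + 2) → Elem A N) →₀ ℂ)
    (hK : K = Finsupp.single (fun k : Fin (p + 2) => ((α k, i k), (α (k + 1), i (k + 1)))) 1) :
    K - hsB (p + 2) (hsS I (p + 1) K) - hsS I p (hsB (p + 1) K) =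
      ((-1 : ℂ) ^ (p + 1)) •
        (Finsupp.single
          (fun j : Fin (p + 2) =>
            if (j : ℕ) = 0 then
              ((α (Fin.last (p + 1)), i (Fin.last (p + 1))), (α 0, I (α 0)))
            else if (j : ℕ) = 1 then ((α 0, I (α 0)), (α 1, i 1))
            else ((α (j - 1), i (j - 1)), (α j, i j))) (1 : ℂ)
        - Finsupp.single
          (fun j : Fin (p + 2) =>
            if (j : ℕ) = 0 then
              ((α (Fin.last (p + 1)), i (Fin.last (p + 1))),
               (α (Fin.last (p + 1)), I (α (Fin.last (p + 1)))))
            else if (j : ℕ) = 1 then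
              ((α (Fin.last (p + 1)), I (α (Fin.last (p + 1)))), (α 1, i 1))
            else ((α (j - 1), i (j - 1)), (α j, i j))) (1 : ℂ)) := by
  subst hK
  rw [show (fun k : Fin (p + 2) => ((α k, i k), (α (k + 1), i (k + 1)))) = dChain p α i from rfl]
  rw [hsS_single, hsB_single, hsB_single, hsS_sum_smul]
  rw [Fin.sum_univ_succ
    (f := fun m : Fin (p + 3) =>
      ((-1 : ℂ) ^ (m : ℕ) * 1) • hsFaceTup (p + 2) m (sFun I (p + 1) (dChain p α i)))]
  rw [Fin.sum_univ_castSucc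
    (f := fun k : Fin (p + 2) =>
      ((-1 : ℂ) ^ ((k.succ : Fin (p + 3)) : ℕ) * 1) •
        hsFaceTup (p + 2) k.succ (sFun I (p + 1) (dChain p α i)))]
  rw [Fin.sum_univ_castSucc
    (f := fun k : Fin (p + 2) =>
      ((-1 : ℂ) ^ (k : ℕ) * 1) • hsS I p (hsFaceTup (p + 1) k (dChain p α i)))]
  rw [faceSe_zero I p α i, Fin.succ_last, faceSe_last I p α i, faceE_last I p α i]
  have hpair : ∀ k : Fin (p + 1),
      hsFaceTup (p + 2) (Fin.succ (Fin.castSucc k)) (sFun I (p + 1) (dChain p α i))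
        = hsS I p (hsFaceTup (p + 1) (Fin.castSucc k) (dChain p α i)) := fun k =>
    cancel I p α i k.castSucc (by simpa using k.isLt)
  have hsum : (∑ k : Fin (p + 1),
        ((-1 : ℂ) ^ (((Fin.castSucc k).succ : Fin (p + 3)) : ℕ) * 1) •
          hsFaceTup (p + 2) (Fin.castSucc k).succ (sFun I (p + 1) (dChain p α i)))
      = - ∑ k : Fin (p + 1),
          ((-1 : ℂ) ^ ((Fin.castSucc k : Fin (p + 2)) : ℕ) * 1) •
            hsS I p (hsFaceTup (p + 1) (Fin.castSucc k) (dChain p α i)) := by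
    rw [← Finset.sum_neg_distrib]
    refine Finset.sum_congr rfl fun k _ => ?_
    rw [hpair k, ← neg_smul]
    congr 1
    simp only [Fin.val_succ, Fin.coe_castSucc, mul_one, pow_succ]
    ring
  rw [hsum]
  simp only [Fin.val_zero, pow_zero, one_mul, one_smul, Fin.val_last, mul_one]
  rw [smul_sub, show ((-1 : ℂ)) ^ (p + 2) = -(-1 : ℂ) ^ (p + 1) from by rw [pow_succ]; ring,
    neg_smul]
  abel

end
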